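/- For every natural number n ≥ 1, ∫_0^1 (1/x) ∫_0^x (1/y) ∫_0^y (1/z) [x^{2n+1} + (x-y)^{2n+1} - (x-z)^{2n+1} - (x-y+z)^{2n+1}] dz dy dx = (1/(2n+1)) ∑_{k=1}^{2n+1} H_{k-1}/k. -/

import Mathlib

open MeasureTheory intervalIntegral Finset

lemma ae_ne_zero' : ∀ᵐ z : ℝ ∂volume, z ≠ 0 := by
  rw [MeasureTheory.ae_iff]
  convert Real.volume_singleton (a := (0:ℝ)) using 2
  ext z; simp

lemma integral_congr_ne_zero {f g : ℝ → ℝ} (a b : ℝ) (h : ∀ z ≠ 0, f z = g z) :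
    ∫ z in a..b, f z = ∫ z in a..b, g z := by
  apply intervalIntegral.integral_congr_ae
  filter_upwards [ae_ne_zero'] with z hz _
  exact h z hz

lemma poly_id (m : ℕ) (x y z : ℝ) (hz : z ≠ 0) :
    (1/z) * (x^m + (x-y)^m - (x-z)^m - (x-y+z)^m)
      = ∑ k ∈ Finset.Icc 1 m,
          ((m.choose k : ℝ) * ((-1)^(k+1) * x^(m-k) - (x-y)^(m-k))) * z^(k-1) := by
  have key : x^m + (x-y)^m - (x-z)^m - (x-y+z)^m
      = (∑ k ∈ Finset.Icc 1 m,
          ((m.choose k : ℝ) * ((-1)^(k+1) * x^(m-k) - (x-y)^(m-k))) * z^(k-1)) * z := by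
    rw [Finset.sum_mul]
    have h1 : (x - z)^m = ∑ k ∈ Finset.range (m+1), (-z)^k * x^(m-k) * (m.choose k) := by
      rw [show x - z = -z + x by ring, add_pow]
    have h2 : (x - y + z)^m
        = ∑ k ∈ Finset.range (m+1), z^k * (x-y)^(m-k) * (m.choose k) := by
      rw [show x - y + z = z + (x - y) by ring, add_pow]
    rw [h1, h2, Finset.sum_range_succ', Finset.sum_range_succ']
    simp only [pow_zero, one_mul, Nat.sub_zero, Nat.choose_zero_right, Nat.cast_one, mul_one]
    rw [← Finset.Ico_add_one_right_eq_Icc, Finset.sum_Ico_eq_sum_range]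
    simp only [Nat.succ_sub_one, Nat.add_sub_cancel]
    have hterm : ∀ i ∈ Finset.range m,
        ((m.choose (1+i) : ℝ) * ((-1)^((1+i)+1) * x^(m-(1+i)) - (x-y)^(m-(1+i)))) * z^((1+i)-1) * z
        = -((-z)^(i+1) * x^(m-(i+1)) * (m.choose (i+1))
            + z^(i+1) * (x-y)^(m-(i+1)) * (m.choose (i+1))) := by
      intro i _
      have h1i : 1 + i = i + 1 := Nat.add_comm 1 i
      rw [h1i]
      simp only [Nat.add_sub_cancel]
      rw [neg_pow]
      ring
    rw [Finset.sum_congr rfl hterm]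
    rw [Finset.sum_neg_distrib, Finset.sum_add_distrib]
    ring
  rw [key]
  field_simp

lemma inner_int (m : ℕ) (x y : ℝ) :
    ∫ z in (0:ℝ)..y, (1/z) * (x^m + (x-y)^m - (x-z)^m - (x-y+z)^m)
      = ∑ k ∈ Finset.Icc 1 m,
          ((m.choose k : ℝ) * ((-1)^(k+1) * x^(m-k) - (x-y)^(m-k))) * (y^k / k) := by
  rw [integral_congr_ne_zero (f := fun z => (1/z) * (x^m + (x-y)^m - (x-z)^m - (x-y+z)^m))
    (g := fun z => ∑ k ∈ Finset.Icc 1 m,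
      ((m.choose k : ℝ) * ((-1)^(k+1) * x^(m-k) - (x-y)^(m-k))) * z^(k-1))
    0 y (fun z hz => poly_id m x y z hz)]
  rw [intervalIntegral.integral_finset_sum
    (fun k _ => (Continuous.intervalIntegrable (by fun_prop) 0 y))]
  apply Finset.sum_congr rfl
  intro k hk
  simp only [Finset.mem_Icc] at hk
  rw [intervalIntegral.integral_const_mul, integral_pow]
  have hk1 : k - 1 + 1 = k := Nat.sub_add_cancel hk.1
  have hc : ((k - 1 : ℕ) : ℝ) + 1 = k := by
    rw [Nat.cast_sub hk.1]; push_cast; ring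
  rw [hk1, hc]
  have : (0:ℝ)^k = 0 := zero_pow (by omega)
  rw [this]
  ring

lemma beta_nat (x : ℝ) : ∀ b a : ℕ, ∫ y in (0:ℝ)..x, y ^ a * (x - y) ^ b
    = x ^ (a + b + 1) * (a.factorial * b.factorial) / (a + b + 1).factorial := by
  intro b
  induction b with
  | zero =>
    intro a
    have hfa : (a.factorial : ℝ) ≠ 0 := by positivity
    simp only [pow_zero, mul_one, integral_pow, Nat.add_zero, Nat.factorial_succ]
    push_cast
    field_simp
    ring
  | succ b ih =>
    intro a
    have hu : ∀ t ∈ Set.uIcc (0:ℝ) x, HasDerivAt (fun y => (x - y) ^ (b+1))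
        (((b:ℝ)+1) * (x - t) ^ b * (-1)) t := by
      intro t _
      have h1 : HasDerivAt (fun y : ℝ => x - y) (-1) t := by
        simpa using (hasDerivAt_id t).const_sub x
      have := h1.fun_pow (b+1)
      simpa using this
    have hv : ∀ t ∈ Set.uIcc (0:ℝ) x, HasDerivAt (fun y : ℝ => y ^ (a+1) / ((a:ℝ)+1))
        (t ^ a) t := by
      intro t _
      have := (hasDerivAt_pow (a+1) t).div_const ((a:ℝ)+1)
      have ha : ((a:ℝ)+1) ≠ 0 := by positivity
      refine this.congr_deriv ?_
      rw [Nat.add_sub_cancel]; push_cast; field_simp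
    have hIBP := intervalIntegral.integral_mul_deriv_eq_deriv_mul hu hv
      (by apply Continuous.intervalIntegrable; fun_prop)
      (by apply Continuous.intervalIntegrable; fun_prop)
    have hre : ∫ y in (0:ℝ)..x, y ^ a * (x - y) ^ (b+1)
        = ∫ y in (0:ℝ)..x, (x - y) ^ (b+1) * y ^ a := by
      apply intervalIntegral.integral_congr; intro t _; ring
    rw [hre, hIBP]
    have hre2 : ∫ y in (0:ℝ)..x, ((b:ℝ)+1) * (x - y) ^ b * (-1) * (y ^ (a+1) / ((a:ℝ)+1))
        = (-((b:ℝ)+1) / ((a:ℝ)+1)) * ∫ y in (0:ℝ)..x, y ^ (a+1) * (x - y) ^ b := by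
      rw [← intervalIntegral.integral_const_mul]
      apply intervalIntegral.integral_congr; intro t _
      field_simp
    rw [hre2, ih (a+1)]
    have h1 : ((a+1:ℕ) + b + 1) = (a + (b+1) + 1) := by omega
    rw [h1]
    have hfa : ((a+b+2).factorial : ℝ) ≠ 0 := by positivity
    simp only [Nat.factorial_succ]
    push_cast
    field_simp
    ring

lemma middle_int (m : ℕ) (hm : 1 ≤ m) (x : ℝ) :
    ∫ y in (0:ℝ)..x, (1/y) * (∑ k ∈ Finset.Icc 1 m,
        ((m.choose k : ℝ) * ((-1)^(k+1) * x^(m-k) - (x-y)^(m-k))) * (y^k / k))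
      = (∑ k ∈ Finset.Icc 1 m, ((-1:ℝ)^(k+1) * (m.choose k)/k^2 - 1/k^2)) * x^m := by
  rw [integral_congr_ne_zero
    (g := fun y => ∑ k ∈ Finset.Icc 1 m, ((m.choose k : ℝ)/k) *
        ((-1)^(k+1) * x^(m-k) * y^(k-1) - (x-y)^(m-k) * y^(k-1)))
    0 x ?_]
  · rw [intervalIntegral.integral_finset_sum
      (fun k _ => (Continuous.intervalIntegrable (by fun_prop) 0 x))]
    rw [Finset.sum_mul]
    apply Finset.sum_congr rfl
    intro k hk
    simp only [Finset.mem_Icc] at hk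
    rw [intervalIntegral.integral_const_mul]
    rw [intervalIntegral.integral_sub
      (Continuous.intervalIntegrable (by fun_prop) 0 x)
      (Continuous.intervalIntegrable (by fun_prop) 0 x)]
    rw [intervalIntegral.integral_const_mul, integral_pow]
    have hbeta : ∫ y in (0:ℝ)..x, (x - y)^(m-k) * y^(k-1)
        = x^m * ((k-1).factorial * (m-k).factorial) / m.factorial := by
      have := beta_nat x (m-k) (k-1)
      have he : (k - 1) + (m - k) + 1 = m := by omega
      rw [he] at this
      rw [← this]
      apply intervalIntegral.integral_congr; intro t _; ring
    rw [hbeta]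
    have hk1 : k - 1 + 1 = k := Nat.sub_add_cancel hk.1
    have hc : ((k - 1 : ℕ) : ℝ) + 1 = k := by
      rw [Nat.cast_sub hk.1]; push_cast; ring
    rw [hk1, hc]
    have h0 : (0:ℝ)^k = 0 := zero_pow (by omega)
    rw [h0]
    have hxm : x^(m-k) * x^k = x^m := by
      rw [← pow_add, Nat.sub_add_cancel hk.2]
    have hfact : (m.choose k : ℝ) * ((k:ℝ) * ((k-1).factorial)) * ((m-k).factorial)
        = m.factorial := by
      have h := Nat.choose_mul_factorial_mul_factorial hk.2
      have hkf : k.factorial = k * (k-1).factorial := by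
        obtain ⟨j, rfl⟩ : ∃ j, k = j + 1 := ⟨k - 1, by omega⟩
        simp [Nat.factorial_succ]
      rw [hkf] at h
      exact_mod_cast congrArg (Nat.cast : ℕ → ℝ) h
    have hk0 : (k:ℝ) ≠ 0 := Nat.cast_ne_zero.mpr (by omega)
    have hmf : (m.factorial : ℝ) ≠ 0 := by positivity
    field_simp
    linear_combination (-(m.choose k : ℝ) * (m.factorial) * (-1:ℝ)^k) * hxm
      - (x^m) * hfact
  · intro y hy
    rw [Finset.mul_sum]
    apply Finset.sum_congr rfl
    intro k hk
    simp only [Finset.mem_Icc] at hk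
    have hyk : y^k = y^(k-1) * y := by
      rw [← pow_succ, Nat.sub_add_cancel hk.1]
    rw [hyk]
    have hk0 : (k:ℝ) ≠ 0 := Nat.cast_ne_zero.mpr (by omega)
    field_simp

/-- The k-th harmonic number, with H 0 = 0. -/
noncomputable def H (k : ℕ) : ℝ := ∑ j ∈ Finset.Icc 1 k, (1 : ℝ) / j

lemma alt_sum_choose (m : ℕ) (hm : 1 ≤ m) :
    ∑ k ∈ Finset.range (m+1), (-1:ℝ)^k * (m.choose k) = 0 := by
  have h0 := Int.alternating_sum_range_choose (n := m)
  rw [if_neg (by omega)] at h0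
  have h1 : ((∑ i ∈ range (m + 1), (-1:ℤ) ^ i * (m.choose i) : ℤ) : ℝ) = 0 := by
    rw [h0]; simp
  push_cast at h1
  exact h1

lemma icc_alt_sum (m : ℕ) :
    ∑ k ∈ Finset.Icc 1 (m+1), (-1:ℝ)^(k+1) * ((m+1).choose k) = 1 := by
  have halt := alt_sum_choose (m+1) (by omega)
  have hsplit : ∑ k ∈ Finset.range (m+2), (-1:ℝ)^k * ((m+1).choose k)
      = 1 + ∑ k ∈ Finset.Icc 1 (m+1), (-1:ℝ)^k * ((m+1).choose k) := by
    rw [Finset.sum_range_succ']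
    have he : ∑ i ∈ Finset.range (m+1), (-1:ℝ)^(i+1) * ((m+1).choose (i+1))
        = ∑ k ∈ Finset.Icc 1 (m+1), (-1:ℝ)^k * ((m+1).choose k) := by
      rw [← Finset.Ico_add_one_right_eq_Icc, Finset.sum_Ico_eq_sum_range]
      simp only [Nat.succ_sub_one, Nat.add_sub_cancel]
      apply Finset.sum_congr rfl
      intro i _
      rw [Nat.add_comm 1 i]
    rw [he]
    simp
    ring
  have h2 : ∑ k ∈ Finset.Icc 1 (m+1), (-1:ℝ)^k * ((m+1).choose k) = -1 := by
    rw [hsplit] at halt; linarith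
  have h3 : ∑ k ∈ Finset.Icc 1 (m+1), (-1:ℝ)^(k+1) * ((m+1).choose k)
      = -∑ k ∈ Finset.Icc 1 (m+1), (-1:ℝ)^k * ((m+1).choose k) := by
    rw [← Finset.sum_neg_distrib]
    apply Finset.sum_congr rfl; intro k _; ring
  rw [h3, h2]; norm_num

lemma shift_sum (m : ℕ) (f : ℕ → ℝ) :
    ∑ k ∈ Finset.Icc 1 (m+1), (-1:ℝ)^(k+1) * (m.choose (k-1)) * f k
      = (1/((m:ℝ)+1)) * ∑ k ∈ Finset.Icc 1 (m+1), (-1:ℝ)^(k+1) * ((m+1).choose k) * ((k:ℝ) * f k) := by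
  rw [Finset.mul_sum]
  apply Finset.sum_congr rfl
  intro k hk
  simp only [Finset.mem_Icc] at hk
  have h2 : (m+1) * m.choose (k-1) = ((m+1).choose k) * k := by
    obtain ⟨j, rfl⟩ : ∃ j, k = j + 1 := ⟨k - 1, by omega⟩
    simpa [Nat.succ_eq_add_one] using Nat.add_one_mul_choose_eq m j
  have h2' : ((m:ℝ)+1) * (m.choose (k-1) : ℝ) = ((m+1).choose k : ℝ) * k := by
    exact_mod_cast congrArg (Nat.cast : ℕ → ℝ) h2
  have hm0 : ((m:ℝ)+1) ≠ 0 := by positivity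
  have hc : (m.choose (k-1) : ℝ) = ((m+1).choose k : ℝ) * k / ((m:ℝ)+1) := by
    field_simp; linarith [h2']
  rw [hc]
  field_simp

lemma T_eq (m : ℕ) : ∑ k ∈ Finset.Icc 1 m, (-1:ℝ)^(k+1) * (m.choose k) / k = H m := by
  induction m with
  | zero => simp [H]
  | succ m ih =>
    have key : ∑ k ∈ Finset.Icc 1 (m+1), (-1:ℝ)^(k+1) * ((m+1).choose k) / k
        = (∑ k ∈ Finset.Icc 1 (m+1), (-1:ℝ)^(k+1) * (m.choose k) / k)
          + ∑ k ∈ Finset.Icc 1 (m+1), (-1:ℝ)^(k+1) * (m.choose (k-1)) * (1/k) := by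
      rw [← Finset.sum_add_distrib]
      apply Finset.sum_congr rfl
      intro k hk
      simp only [Finset.mem_Icc] at hk
      have h1 : (m+1).choose k = m.choose k + m.choose (k-1) := by
        obtain ⟨j, rfl⟩ : ∃ j, k = j + 1 := ⟨k - 1, by omega⟩
        simp [Nat.succ_sub_one, Nat.choose_succ_succ, Nat.add_comm]
      rw [h1]; push_cast; ring
    have hext : ∑ k ∈ Finset.Icc 1 (m+1), (-1:ℝ)^(k+1) * (m.choose k) / k
        = ∑ k ∈ Finset.Icc 1 m, (-1:ℝ)^(k+1) * (m.choose k) / k := by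
      rw [Finset.sum_Icc_succ_top (by omega : 1 ≤ m+1)]
      simp [Nat.choose_succ_self]
    have hsh : ∑ k ∈ Finset.Icc 1 (m+1), (-1:ℝ)^(k+1) * (m.choose (k-1)) * (1/k)
        = 1 / ((m:ℝ)+1) := by
      rw [shift_sum m (fun k => 1/(k:ℝ))]
      have he : ∑ k ∈ Finset.Icc 1 (m+1), (-1:ℝ)^(k+1) * ((m+1).choose k) * ((k:ℝ) * (1/k))
          = ∑ k ∈ Finset.Icc 1 (m+1), (-1:ℝ)^(k+1) * ((m+1).choose k) := by
        apply Finset.sum_congr rfl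
        intro k hk
        simp only [Finset.mem_Icc] at hk
        have hk0 : (k:ℝ) ≠ 0 := Nat.cast_ne_zero.mpr (by omega)
        field_simp
      rw [he, icc_alt_sum]; ring
    rw [key, hext, hsh, ih]
    unfold H
    rw [Finset.sum_Icc_succ_top (by omega : 1 ≤ m+1)]
    push_cast; ring

lemma S_eq (m : ℕ) : ∑ k ∈ Finset.Icc 1 m, (-1:ℝ)^(k+1) * (m.choose k) / k^2
    = ∑ k ∈ Finset.Icc 1 m, H k / k := by
  induction m with
  | zero => simp
  | succ m ih =>
    have key : ∑ k ∈ Finset.Icc 1 (m+1), (-1:ℝ)^(k+1) * ((m+1).choose k) / k^2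
        = (∑ k ∈ Finset.Icc 1 (m+1), (-1:ℝ)^(k+1) * (m.choose k) / k^2)
          + ∑ k ∈ Finset.Icc 1 (m+1), (-1:ℝ)^(k+1) * (m.choose (k-1)) * (1/k^2) := by
      rw [← Finset.sum_add_distrib]
      apply Finset.sum_congr rfl
      intro k hk
      simp only [Finset.mem_Icc] at hk
      have h1 : (m+1).choose k = m.choose k + m.choose (k-1) := by
        obtain ⟨j, rfl⟩ : ∃ j, k = j + 1 := ⟨k - 1, by omega⟩
        simp [Nat.succ_sub_one, Nat.choose_succ_succ, Nat.add_comm]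
      rw [h1]; push_cast; ring
    have hext : ∑ k ∈ Finset.Icc 1 (m+1), (-1:ℝ)^(k+1) * (m.choose k) / k^2
        = ∑ k ∈ Finset.Icc 1 m, (-1:ℝ)^(k+1) * (m.choose k) / k^2 := by
      rw [Finset.sum_Icc_succ_top (by omega : 1 ≤ m+1)]
      simp [Nat.choose_succ_self]
    have hsh : ∑ k ∈ Finset.Icc 1 (m+1), (-1:ℝ)^(k+1) * (m.choose (k-1)) * (1/k^2)
        = H (m+1) / ((m:ℝ)+1) := by
      rw [shift_sum m (fun k => 1/(k:ℝ)^2)]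
      have he : ∑ k ∈ Finset.Icc 1 (m+1), (-1:ℝ)^(k+1) * ((m+1).choose k) * ((k:ℝ) * (1/k^2))
          = ∑ k ∈ Finset.Icc 1 (m+1), (-1:ℝ)^(k+1) * ((m+1).choose k) / k := by
        apply Finset.sum_congr rfl
        intro k hk
        simp only [Finset.mem_Icc] at hk
        have hk0 : (k:ℝ) ≠ 0 := Nat.cast_ne_zero.mpr (by omega)
        field_simp
      rw [he, T_eq]; ring
    rw [key, hext, hsh, ih]
    rw [Finset.sum_Icc_succ_top (by omega : 1 ≤ m+1)]
    push_cast; ring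

lemma final_sum (m : ℕ) :
    ∑ k ∈ Finset.Icc 1 m, ((-1:ℝ)^(k+1) * (m.choose k) / k^2 - 1/k^2)
      = ∑ k ∈ Finset.Icc 1 m, H (k-1) / k := by
  rw [Finset.sum_sub_distrib, S_eq, ← Finset.sum_sub_distrib]
  apply Finset.sum_congr rfl
  intro k hk
  simp only [Finset.mem_Icc] at hk
  obtain ⟨j, rfl⟩ : ∃ j, k = j + 1 := ⟨k - 1, by omega⟩
  have hHk : H (j+1) = H j + 1/((j:ℝ)+1) := by
    unfold H
    rw [Finset.sum_Icc_succ_top (by omega : 1 ≤ j+1)]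
    push_cast; ring
  have hk0 : ((j:ℝ)+1) ≠ 0 := by positivity
  simp only [Nat.add_sub_cancel, hHk]
  push_cast
  field_simp
  ring

theorem stmt_6 (n : ℕ) (hn : 1 ≤ n) :
    ∫ x in (0 : ℝ)..1, (1 / x) * ∫ y in (0 : ℝ)..x, (1 / y) *
      ∫ z in (0 : ℝ)..y, (1 / z) *
        (x ^ (2 * n + 1) + (x - y) ^ (2 * n + 1)
          - (x - z) ^ (2 * n + 1) - (x - y + z) ^ (2 * n + 1)) =
      (1 / (2 * n + 1)) * ∑ k ∈ Finset.Icc 1 (2 * n + 1), H (k - 1) / k := by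
  have hm1 : 1 ≤ 2*n+1 := by omega
  set C : ℝ := ∑ k ∈ Finset.Icc 1 (2*n+1),
    ((-1:ℝ)^(k+1) * ((2*n+1).choose k)/k^2 - 1/k^2) with hC
  have hmid : ∀ x : ℝ,
      (∫ y in (0:ℝ)..x, (1/y) * ∫ z in (0:ℝ)..y, (1/z) *
        (x^(2*n+1) + (x-y)^(2*n+1) - (x-z)^(2*n+1) - (x-y+z)^(2*n+1)))
      = C * x^(2*n+1) := by
    intro x
    have h1 : (∫ y in (0:ℝ)..x, (1/y) * ∫ z in (0:ℝ)..y, (1/z) *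
        (x^(2*n+1) + (x-y)^(2*n+1) - (x-z)^(2*n+1) - (x-y+z)^(2*n+1)))
        = ∫ y in (0:ℝ)..x, (1/y) * (∑ k ∈ Finset.Icc 1 (2*n+1),
            (((2*n+1).choose k : ℝ) * ((-1)^(k+1) * x^(2*n+1-k) - (x-y)^(2*n+1-k)))
              * (y^k / k)) := by
      apply intervalIntegral.integral_congr
      intro y _
      beta_reduce
      rw [inner_int]
    rw [h1, middle_int (2*n+1) hm1 x]
  have h2 : (∫ x in (0:ℝ)..1, (1 / x) * ∫ y in (0 : ℝ)..x, (1 / y) *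
      ∫ z in (0 : ℝ)..y, (1 / z) *
        (x ^ (2 * n + 1) + (x - y) ^ (2 * n + 1)
          - (x - z) ^ (2 * n + 1) - (x - y + z) ^ (2 * n + 1)))
      = ∫ x in (0:ℝ)..1, (1/x) * (C * x^(2*n+1)) := by
    apply intervalIntegral.integral_congr
    intro x _
    beta_reduce
    rw [hmid x]
  rw [h2]
  have h3 : (∫ x in (0:ℝ)..1, (1/x) * (C * x^(2*n+1)))
      = ∫ x in (0:ℝ)..1, C * x^(2*n) := by
    apply integral_congr_ne_zero
    intro x hx
    rw [pow_succ]
    field_simp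
  rw [h3, intervalIntegral.integral_const_mul, integral_pow]
  rw [hC, final_sum (2*n+1), one_pow, zero_pow (by omega : 2*n+1 ≠ 0)]
  push_cast
  ring
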